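/- The tensor A of order 4 and dimension 2 with a_{1111} = 2, a_{1112} = 1, a_{2122} = 4, a_{2222} = 2 and all other entries zero is a column adequate tensor, but is neither a P-tensor nor a positive semi-definite tensor. -/

import Mathlib

open Finset Matrix

/-- For a tensor `A` of order `k+1` and dimension `n`, `tmul A x i = (A x^k)_i`. -/
def tmul {n k : ℕ} (A : Fin n → (Fin k → Fin n) → ℝ) (x : Fin n → ℝ) (i : Fin n) : ℝ :=
  ∑ f : Fin k → Fin n, A i f * ∏ j, x (f j)

/-- A tensor is column adequate if `x_i (A x^{m-1})_i ≤ 0` for all `i` implies `A x^{m-1} = 0`. -/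
def ColumnAdequate {n k : ℕ} (A : Fin n → (Fin k → Fin n) → ℝ) : Prop :=
  ∀ x : Fin n → ℝ, (∀ i, x i * tmul A x i ≤ 0) → ∀ i, tmul A x i = 0

/-- A tensor is row diagonal if `a_{i i2...im}` can be nonzero only when `i2 = ... = im`. -/
def RowDiagonal {n k : ℕ} (A : Fin n → (Fin k → Fin n) → ℝ) : Prop :=
  ∀ i f, A i f ≠ 0 → ∀ j j' : Fin k, f j = f j'

/-- The majorization matrix of a tensor: `M(A)_{ij} = a_{ijj...j}`. -/
def majorization {n k : ℕ} (A : Fin n → (Fin k → Fin n) → ℝ) : Matrix (Fin n) (Fin n) ℝ :=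
  fun i j => A i (fun _ => j)

/-- A square matrix `M` (over any finite index type) is column adequate if
`z_i (Mz)_i ≤ 0` for all `i` implies `Mz = 0`. -/
def MatrixColumnAdequate {ι : Type*} [Fintype ι] (M : Matrix ι ι ℝ) : Prop :=
  ∀ z : ι → ℝ, (∀ i, z i * M.mulVec z i ≤ 0) → M.mulVec z = 0

/-- The order-4 dimension-2 tensor with `a_{1111} = 2`, `a_{1112} = 1`, `a_{2122} = 4`,
`a_{2222} = 2` and all other entries zero. -/
noncomputable def exTensor17 : Fin 2 → (Fin 3 → Fin 2) → ℝ := fun i f =>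
  if i = 0 ∧ f = ![0, 0, 0] then 2
  else if i = 0 ∧ f = ![0, 0, 1] then 1
  else if i = 1 ∧ f = ![0, 1, 1] then 4
  else if i = 1 ∧ f = ![1, 1, 1] then 2
  else 0

lemma univ_eq : (univ : Finset (Fin 3 → Fin 2)) =
    {![0,0,0], ![0,0,1], ![0,1,0], ![0,1,1], ![1,0,0], ![1,0,1], ![1,1,0], ![1,1,1]} := by
  decide

lemma tmul0 (x : Fin 2 → ℝ) : tmul exTensor17 x 0 = x 0 ^ 2 * (2 * x 0 + x 1) := by
  rw [tmul, univ_eq]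
  repeat rw [Finset.sum_insert (by decide)]
  rw [Finset.sum_singleton]
  simp (config := { decide := true }) only [exTensor17, Fin.prod_univ_three]
  norm_num [Matrix.cons_val_zero, Matrix.cons_val_one, Matrix.cons_val_two, Matrix.tail_cons, Matrix.head_cons]
  ring

lemma tmul1 (x : Fin 2 → ℝ) : tmul exTensor17 x 1 = 2 * x 1 ^ 2 * (2 * x 0 + x 1) := by
  rw [tmul, univ_eq]
  repeat rw [Finset.sum_insert (by decide)]
  rw [Finset.sum_singleton]
  simp (config := { decide := true }) only [exTensor17, Fin.prod_univ_three]
  norm_num [Matrix.cons_val_zero, Matrix.cons_val_one, Matrix.cons_val_two, Matrix.tail_cons, Matrix.head_cons]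
  ring


lemma key (x : Fin 2 → ℝ) (h : ∀ i, x i * tmul exTensor17 x i ≤ 0) : 2 * x 0 + x 1 = 0 ∨ (x 0 = 0 ∧ x 1 = 0) := by
  have h0 := h 0; have h1 := h 1
  rw [tmul0] at h0; rw [tmul1] at h1
  rcases lt_trichotomy (2 * x 0 + x 1) 0 with hs | hs | hs
  · have hx0 : 0 ≤ x 0 := by
      by_contra hc; push_neg at hc
      nlinarith [mul_pos (mul_pos (mul_pos (neg_pos.2 hc) (neg_pos.2 hc)) (neg_pos.2 hc)) (neg_pos.2 hs)]
    have hx1 : 0 ≤ x 1 := by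
      by_contra hc; push_neg at hc
      nlinarith [mul_pos (mul_pos (mul_pos (neg_pos.2 hc) (neg_pos.2 hc)) (neg_pos.2 hc)) (neg_pos.2 hs)]
    linarith
  · exact Or.inl hs
  · have hx0 : x 0 ≤ 0 := by
      by_contra hc; push_neg at hc
      nlinarith [mul_pos (mul_pos (mul_pos hc hc) hc) hs]
    have hx1 : x 1 ≤ 0 := by
      by_contra hc; push_neg at hc
      nlinarith [mul_pos (mul_pos (mul_pos hc hc) hc) hs]
    linarith


/-- This tensor is column adequate, but neither a P-tensor nor positive semi-definite. -/
theorem exTensor17_adequate_not_P_not_PSD :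
    ColumnAdequate exTensor17 ∧
    ¬ (∀ x : Fin 2 → ℝ, x ≠ 0 → ∃ i, x i ≠ 0 ∧ 0 < x i * tmul exTensor17 x i) ∧
    ¬ (∀ x : Fin 2 → ℝ, 0 ≤ ∑ i, x i * tmul exTensor17 x i) := by
  refine ⟨?_, ?_, ?_⟩
  · intro x hx i
    rcases key x hx with hs | ⟨h0, h1⟩
    · fin_cases i
      · show tmul exTensor17 x 0 = 0; rw [tmul0, hs]; ring
      · show tmul exTensor17 x 1 = 0; rw [tmul1, hs]; ring
    · fin_cases i
      · show tmul exTensor17 x 0 = 0; rw [tmul0, h0]; ring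
      · show tmul exTensor17 x 1 = 0; rw [tmul1, h0, h1]; ring
  · intro h
    obtain ⟨i, hi, hpos⟩ := h ![1, -2] (by intro hc; have := congrFun hc 0; norm_num at this)
    fin_cases i
    · have h2 : (0:ℝ) < ![(1:ℝ), -2] 0 * tmul exTensor17 ![1, -2] 0 := hpos
      rw [tmul0] at h2; norm_num at h2
    · have h2 : (0:ℝ) < ![(1:ℝ), -2] 1 * tmul exTensor17 ![1, -2] 1 := hpos
      rw [tmul1] at h2; norm_num at h2
  · intro h
    have := h ![1, -3/2]
    rw [Fin.sum_univ_two, tmul0, tmul1] at this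
    norm_num at this
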